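/- The risky Black–Scholes formula 𝓑𝓢̂(t,S) := 𝓑𝓢(t,S) e^{−(λ_B(1−R_B)+λ_C(1−R_C)) t} satisfies, for every t ∈ (0,T) and S>0, the risky (nonlinear) Black–Scholes equation ∂_t𝓑𝓢̂ − (σ²S²/2)∂_{SS}𝓑𝓢̂ − r_R S ∂_S𝓑𝓢̂ + r 𝓑𝓢̂ + f(𝓑𝓢̂) = 0. -/

import Mathlib

/-- Standard normal cumulative distribution function. -/
noncomputable def Phi (x : ℝ) : ℝ :=
  (Real.sqrt (2 * Real.pi))⁻¹ * ∫ u in Set.Iic x, Real.exp (-u ^ 2 / 2)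

/-- `ζ₁ = (log(S/K) + (r_R + σ²/2)t)/(σ√t)`. -/
noncomputable def zeta1 (σ K r_R t S : ℝ) : ℝ :=
  (Real.log (S / K) + (r_R + σ ^ 2 / 2) * t) / (σ * Real.sqrt t)

/-- `ζ₂ = ζ₁ − σ√t`. -/
noncomputable def zeta2 (σ K r_R t S : ℝ) : ℝ :=
  zeta1 σ K r_R t S - σ * Real.sqrt t

/-- The Black–Scholes formula
`𝓑𝓢(t,S) = α S e^{−(r−r_R)t} Φ(αζ₁) − α K e^{−rt} Φ(αζ₂)` (t = time to maturity). -/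
noncomputable def BS (σ K r r_R α t S : ℝ) : ℝ :=
  α * S * Real.exp (-(r - r_R) * t) * Phi (α * zeta1 σ K r_R t S)
    - α * K * Real.exp (-r * t) * Phi (α * zeta2 σ K r_R t S)

/-- The XVA source term `f(v) = λ_B(1−R_B) min{v,0} + (λ_C(1−R_C)+s_F) max{v,0}`
with funding spread `s_F = (1−R_B)λ_B`. -/
noncomputable def fXVA (lB lC RB RC : ℝ) (v : ℝ) : ℝ :=
  lB * (1 - RB) * min v 0 + (lC * (1 - RC) + (1 - RB) * lB) * max v 0



section BSproofAux
open MeasureTheory Real Set Filter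
variable {σ K r r_R t S α : ℝ}

noncomputable def gauss (u : ℝ) : ℝ := Real.exp (-u ^ 2 / 2)

lemma gauss_neg (x : ℝ) : gauss (-x) = gauss x := by simp [gauss]

lemma gauss_eq : gauss = fun u => Real.exp (-(1/2 : ℝ) * u ^ 2) := by
  funext u; unfold gauss; ring_nf

lemma integrable_gauss : Integrable gauss := by
  rw [gauss_eq]; exact integrable_exp_neg_mul_sq (by norm_num)

lemma continuous_gauss : Continuous gauss := by
  unfold gauss; continuity

lemma Phi_eq (x : ℝ) :
    Phi x = (Real.sqrt (2 * Real.pi))⁻¹ *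
      ((∫ u in Set.Iic (0:ℝ), gauss u) + ∫ u in (0:ℝ)..x, gauss u) := by
  unfold Phi
  congr 1
  rw [intervalIntegral.integral_Iic_sub_Iic (integrable_gauss.integrableOn)
    (integrable_gauss.integrableOn) |>.symm]
  unfold gauss; ring

lemma hasDerivAt_Phi (x : ℝ) :
    HasDerivAt Phi ((Real.sqrt (2 * Real.pi))⁻¹ * gauss x) x := by
  have h : HasDerivAt (fun y => (∫ u in Set.Iic (0:ℝ), gauss u) + ∫ u in (0:ℝ)..y, gauss u)
      (gauss x) x := by
    refine (intervalIntegral.integral_hasDerivAt_right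
      (integrable_gauss.intervalIntegrable)
      (continuous_gauss.stronglyMeasurableAtFilter _ _)
      continuous_gauss.continuousAt).const_add _
  have := h.const_mul ((Real.sqrt (2 * Real.pi))⁻¹)
  refine this.congr_of_eventuallyEq ?_
  filter_upwards with y
  rw [Phi_eq]

lemma Phi_nonneg (x : ℝ) : 0 ≤ Phi x := by
  unfold Phi
  apply mul_nonneg (inv_nonneg.2 (Real.sqrt_nonneg _))
  exact setIntegral_nonneg measurableSet_Iic fun u _ => (Real.exp_pos _).le

lemma tendsto_Phi_atBot : Tendsto Phi atBot (nhds 0) := by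
  have hsq : ∀ x : ℝ, x ≤ -2 → (∫ u in Set.Iic x, Real.exp (-u ^ 2 / 2)) ≤ Real.exp x := by
    intro x hx
    calc (∫ u in Set.Iic x, Real.exp (-u ^ 2 / 2)) ≤ ∫ u in Set.Iic x, Real.exp u := by
          apply setIntegral_mono_on integrable_gauss.integrableOn
            (integrableOn_exp_Iic x) measurableSet_Iic
          intro u hu
          apply Real.exp_le_exp.2
          have : u ≤ -2 := le_trans hu hx
          nlinarith
      _ = Real.exp x := integral_exp_Iic x
  have h0 : ∀ x : ℝ, 0 ≤ Phi x := Phi_nonneg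
  have hb : ∀ᶠ x in atBot, Phi x ≤ (Real.sqrt (2 * Real.pi))⁻¹ * Real.exp x := by
    filter_upwards [eventually_le_atBot (-2 : ℝ)] with x hx
    unfold Phi
    have := hsq x hx
    have h2 : (0:ℝ) ≤ (Real.sqrt (2 * Real.pi))⁻¹ := inv_nonneg.2 (Real.sqrt_nonneg _)
    exact mul_le_mul_of_nonneg_left this h2
  have hexp : Tendsto (fun x => (Real.sqrt (2 * Real.pi))⁻¹ * Real.exp x) atBot (nhds 0) := by
    simpa using (Real.tendsto_exp_atBot.const_mul ((Real.sqrt (2 * Real.pi))⁻¹))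
  exact squeeze_zero' (Filter.Eventually.of_forall h0) hb hexp

variable {σ K r r_R t S : ℝ}

lemma st_pos (hσ : 0 < σ) (ht : 0 < t) : 0 < σ * Real.sqrt t :=
  mul_pos hσ (Real.sqrt_pos.2 ht)

/-- spatial derivative of zeta1 -/

lemma hasDerivAt_zeta1_S (hσ : 0 < σ) (hK : 0 < K) (ht : 0 < t) (hS : 0 < S) :
    HasDerivAt (fun s => zeta1 σ K r_R t s) ((S * (σ * Real.sqrt t))⁻¹) S := by
  have h0 : HasDerivAt (fun s : ℝ => s / K) (1 / K) S := by
    simpa using (hasDerivAt_id S).div_const K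
  have h1 : HasDerivAt (fun s : ℝ => Real.log (s / K)) ((S / K)⁻¹ * (1 / K)) S :=
    (Real.hasDerivAt_log (by positivity)).comp S h0
  have h2 := ((h1.add_const ((r_R + σ ^ 2 / 2) * t)).div_const (σ * Real.sqrt t))
  refine h2.congr_deriv (Eq.symm ?_)
  have hst := st_pos hσ ht
  field_simp

lemma hasDerivAt_zeta2_S (hσ : 0 < σ) (hK : 0 < K) (ht : 0 < t) (hS : 0 < S) :
    HasDerivAt (fun s => zeta2 σ K r_R t s) ((S * (σ * Real.sqrt t))⁻¹) S :=
  (hasDerivAt_zeta1_S hσ hK ht hS).sub_const _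

/-- time derivative of zeta1 (quotient rule form) -/

noncomputable def dz1 (σ K r_R t S : ℝ) : ℝ :=
  ((r_R + σ ^ 2 / 2) * (σ * Real.sqrt t) -
    (Real.log (S / K) + (r_R + σ ^ 2 / 2) * t) * (σ / (2 * Real.sqrt t))) /
    (σ * Real.sqrt t) ^ 2

lemma hasDerivAt_sqrt' (ht : 0 < t) :
    HasDerivAt (fun τ : ℝ => σ * Real.sqrt τ) (σ / (2 * Real.sqrt t)) t := by
  have h := (Real.hasDerivAt_sqrt ht.ne').const_mul σ
  refine h.congr_deriv (Eq.symm ?_)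
  rw [div_eq_mul_inv, mul_inv]
  ring

lemma hasDerivAt_zeta1_t (hσ : 0 < σ) (ht : 0 < t) :
    HasDerivAt (fun τ => zeta1 σ K r_R τ S) (dz1 σ K r_R t S) t := by
  have hnum : HasDerivAt (fun τ : ℝ => Real.log (S / K) + (r_R + σ ^ 2 / 2) * τ)
      (r_R + σ ^ 2 / 2) t := by
    simpa using ((hasDerivAt_id t).const_mul (r_R + σ ^ 2 / 2)).const_add (Real.log (S / K))
  exact hnum.div (hasDerivAt_sqrt' ht) (st_pos hσ ht).ne'

lemma hasDerivAt_zeta2_t (hσ : 0 < σ) (ht : 0 < t) :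
    HasDerivAt (fun τ => zeta2 σ K r_R τ S) (dz1 σ K r_R t S - σ / (2 * Real.sqrt t)) t :=
  (hasDerivAt_zeta1_t hσ ht).sub (hasDerivAt_sqrt' ht)

/-- The key density identity. -/

lemma key_identity (hσ : 0 < σ) (hK : 0 < K) (ht : 0 < t) (hS : 0 < S) :
    S * Real.exp (-(r - r_R) * t) * gauss (zeta1 σ K r_R t S)
      = K * Real.exp (-r * t) * gauss (zeta2 σ K r_R t S) := by
  have hu : Real.sqrt t ^ 2 = t := Real.sq_sqrt ht.le
  have hu0 : 0 < Real.sqrt t := Real.sqrt_pos.2 ht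
  unfold gauss zeta2 zeta1
  have hst : σ * Real.sqrt t ≠ 0 := (st_pos hσ ht).ne'
  set z : ℝ := (Real.log (S / K) + (r_R + σ ^ 2 / 2) * t) / (σ * Real.sqrt t) with hz
  have hL : S * Real.exp (-(r - r_R) * t) * Real.exp (-z ^ 2 / 2)
      = Real.exp (Real.log S + -(r - r_R) * t + -z ^ 2 / 2) := by
    rw [Real.exp_add, Real.exp_add, Real.exp_log hS]
  have hR : K * Real.exp (-r * t) * Real.exp (-(z - σ * Real.sqrt t) ^ 2 / 2)
      = Real.exp (Real.log K + -r * t + -(z - σ * Real.sqrt t) ^ 2 / 2) := by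
    rw [Real.exp_add, Real.exp_add, Real.exp_log hK]
  rw [hL, hR]
  congr 1
  have hzz : z * (σ * Real.sqrt t) = Real.log S - Real.log K + (r_R + σ ^ 2 / 2) * t := by
    rw [hz, div_mul_cancel₀ _ hst, Real.log_div hS.ne' hK.ne']
  nlinarith [hzz, hu]

variable {σ K r r_R t S α : ℝ}

/-- Delta. -/

lemma hasDerivAt_BS_S (hσ : 0 < σ) (hK : 0 < K) (hα : α = 1 ∨ α = -1)
    (ht : 0 < t) (hS : 0 < S) :
    HasDerivAt (fun s => BS σ K r r_R α t s)
      (α * Real.exp (-(r - r_R) * t) * Phi (α * zeta1 σ K r_R t S)) S := by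
  set c := (Real.sqrt (2 * Real.pi))⁻¹ with hc
  have hP1 : HasDerivAt (fun s => Phi (α * zeta1 σ K r_R t s))
      (c * gauss (α * zeta1 σ K r_R t S) * (α * (S * (σ * Real.sqrt t))⁻¹)) S :=
    (hasDerivAt_Phi _).comp S ((hasDerivAt_zeta1_S hσ hK ht hS).const_mul α)
  have hP2 : HasDerivAt (fun s => Phi (α * zeta2 σ K r_R t s))
      (c * gauss (α * zeta2 σ K r_R t S) * (α * (S * (σ * Real.sqrt t))⁻¹)) S :=
    (hasDerivAt_Phi _).comp S ((hasDerivAt_zeta2_S hσ hK ht hS).const_mul α)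
  have hlin : HasDerivAt (fun s : ℝ => α * s * Real.exp (-(r - r_R) * t))
      (α * Real.exp (-(r - r_R) * t)) S := by
    simpa using ((hasDerivAt_id S).const_mul α).mul_const (Real.exp (-(r - r_R) * t))
  have h1 := hlin.mul hP1
  have h2 := hP2.const_mul (α * K * Real.exp (-r * t))
  have h := h1.sub h2
  have heq : (fun s => α * s * Real.exp (-(r - r_R) * t) * Phi (α * zeta1 σ K r_R t s)
      - α * K * Real.exp (-r * t) * Phi (α * zeta2 σ K r_R t s))
      = fun s => BS σ K r r_R α t s := by
    funext s; rw [BS]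
  rw [← heq]
  refine h.congr_deriv (Eq.symm ?_)
  have hk := key_identity (r := r) (r_R := r_R) hσ hK ht hS
  rcases hα with rfl | rfl
  · simp only [one_mul]
    linear_combination (-(c * (S * (σ * Real.sqrt t))⁻¹)) * hk
  · simp only [neg_one_mul, gauss_neg]
    linear_combination (-(c * (S * (σ * Real.sqrt t))⁻¹)) * hk

/-- Theta. -/

lemma hasDerivAt_BS_t (hσ : 0 < σ) (hK : 0 < K) (hα : α = 1 ∨ α = -1)
    (ht : 0 < t) (hS : 0 < S) :
    HasDerivAt (fun τ => BS σ K r r_R α τ S)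
      (-(r - r_R) * (α * S * Real.exp (-(r - r_R) * t) * Phi (α * zeta1 σ K r_R t S))
        + r * (α * K * Real.exp (-r * t) * Phi (α * zeta2 σ K r_R t S))
        + S * Real.exp (-(r - r_R) * t) *
          ((Real.sqrt (2 * Real.pi))⁻¹ * gauss (zeta1 σ K r_R t S)) *
          (σ / (2 * Real.sqrt t))) t := by
  set c := (Real.sqrt (2 * Real.pi))⁻¹ with hc
  have hP1 : HasDerivAt (fun τ => Phi (α * zeta1 σ K r_R τ S))
      (c * gauss (α * zeta1 σ K r_R t S) * (α * dz1 σ K r_R t S)) t :=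
    (hasDerivAt_Phi _).comp t ((hasDerivAt_zeta1_t hσ ht).const_mul α)
  have hP2 : HasDerivAt (fun τ => Phi (α * zeta2 σ K r_R τ S))
      (c * gauss (α * zeta2 σ K r_R t S)
        * (α * (dz1 σ K r_R t S - σ / (2 * Real.sqrt t)))) t :=
    (hasDerivAt_Phi _).comp t ((hasDerivAt_zeta2_t hσ ht).const_mul α)
  have hD1 : HasDerivAt (fun τ : ℝ => α * S * Real.exp (-(r - r_R) * τ))
      (α * S * (Real.exp (-(r - r_R) * t) * -(r - r_R))) t := by
    have := (Real.hasDerivAt_exp (-(r - r_R) * t)).comp t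
      ((hasDerivAt_id t).const_mul (-(r - r_R)))
    simpa [mul_comm, mul_assoc, mul_left_comm] using (this.const_mul (α * S))
  have hD2 : HasDerivAt (fun τ : ℝ => α * K * Real.exp (-r * τ))
      (α * K * (Real.exp (-r * t) * -r)) t := by
    have := (Real.hasDerivAt_exp (-r * t)).comp t ((hasDerivAt_id t).const_mul (-r))
    simpa [mul_comm, mul_assoc, mul_left_comm] using (this.const_mul (α * K))
  have h := (hD1.mul hP1).sub (hD2.mul hP2)
  have heq : (fun τ => α * S * Real.exp (-(r - r_R) * τ) * Phi (α * zeta1 σ K r_R τ S)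
      - α * K * Real.exp (-r * τ) * Phi (α * zeta2 σ K r_R τ S))
      = fun τ => BS σ K r r_R α τ S := by
    funext τ; rw [BS]
  rw [← heq]
  refine h.congr_deriv (Eq.symm ?_)
  have hk := key_identity (r := r) (r_R := r_R) hσ hK ht hS
  rcases hα with rfl | rfl
  · simp only [one_mul]
    linear_combination (-(c * (dz1 σ K r_R t S - σ / (2 * Real.sqrt t)))) * hk
  · simp only [neg_one_mul, gauss_neg]
    linear_combination (-(c * (dz1 σ K r_R t S - σ / (2 * Real.sqrt t)))) * hk

variable {σ K r r_R t S α : ℝ}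

/-- Gamma building block. -/

lemma hasDerivAt_Delta (hσ : 0 < σ) (hK : 0 < K) (hα : α = 1 ∨ α = -1)
    (ht : 0 < t) (hS : 0 < S) (E : ℝ) :
    HasDerivAt (fun s => α * Real.exp (-(r - r_R) * t) * Phi (α * zeta1 σ K r_R t s) * E)
      (Real.exp (-(r - r_R) * t) * ((Real.sqrt (2 * Real.pi))⁻¹ * gauss (zeta1 σ K r_R t S))
        * (S * (σ * Real.sqrt t))⁻¹ * E) S := by
  have hP1 : HasDerivAt (fun s => Phi (α * zeta1 σ K r_R t s))
      ((Real.sqrt (2 * Real.pi))⁻¹ * gauss (α * zeta1 σ K r_R t S)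
        * (α * (S * (σ * Real.sqrt t))⁻¹)) S :=
    (hasDerivAt_Phi _).comp S ((hasDerivAt_zeta1_S hσ hK ht hS).const_mul α)
  have h := (hP1.const_mul (α * Real.exp (-(r - r_R) * t))).mul_const E
  refine h.congr_deriv (Eq.symm ?_)
  rcases hα with rfl | rfl
  · simp only [one_mul]; ring
  · simp only [neg_one_mul, gauss_neg]; ring

/-- The call-type value with `r = 0` is nonnegative. -/

lemma call0_nonneg (hσ : 0 < σ) (hK : 0 < K) (ht : 0 < t) (hS : 0 < S) :
    0 ≤ BS σ K 0 r_R 1 t S := by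
  set g : ℝ → ℝ := fun s => BS σ K 0 r_R 1 t s with hg
  have hg' : ∀ s ∈ Ioi (0:ℝ), HasDerivAt g
      (Real.exp (-(0 - r_R) * t) * Phi (zeta1 σ K r_R t s)) s := by
    intro s hs
    have := hasDerivAt_BS_S (r := 0) (r_R := r_R) (α := 1) hσ hK (Or.inl rfl) ht hs
    simpa using this
  have hmono : MonotoneOn g (Ioi 0) := by
    have hC : ContinuousOn g (Ioi 0) := fun s hs =>
      (hg' s hs).differentiableAt.continuousAt.continuousWithinAt
    refine monotoneOn_of_deriv_nonneg (convex_Ioi 0) hC ?_ ?_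
    · intro s hs
      rw [interior_Ioi] at hs
      exact (hg' s hs).differentiableAt.differentiableWithinAt
    · intro s hs
      rw [interior_Ioi] at hs
      rw [(hg' s hs).deriv]
      exact mul_nonneg (Real.exp_pos _).le (Phi_nonneg _)
  have hz1 : Tendsto (fun s => zeta1 σ K r_R t s) (nhdsWithin 0 (Ioi 0)) atBot := by
    have hlog : Tendsto (fun s : ℝ => Real.log (s / K)) (nhdsWithin 0 (Ioi 0)) atBot := by
      apply Real.tendsto_log_nhdsGT_zero.comp
      rw [tendsto_nhdsWithin_iff]
      constructor
      · have : Tendsto (fun s : ℝ => s / K) (nhdsWithin 0 (Ioi 0)) (nhds (0 / K)) :=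
          (tendsto_id.div_const K).mono_left nhdsWithin_le_nhds
        simpa using this
      · filter_upwards [self_mem_nhdsWithin] with s hs
        exact div_pos hs hK
    have h2 : Tendsto (fun s : ℝ => Real.log (s / K) + (r_R + σ ^ 2 / 2) * t)
        (nhdsWithin 0 (Ioi 0)) atBot := tendsto_atBot_add_const_right _ _ hlog
    exact h2.atBot_div_const (st_pos hσ ht)
  have hz2 : Tendsto (fun s => zeta2 σ K r_R t s) (nhdsWithin 0 (Ioi 0)) atBot := by
    unfold zeta2
    exact tendsto_atBot_add_const_right _ (-(σ * Real.sqrt t)) hz1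
  have hP1 : Tendsto (fun s => Phi (zeta1 σ K r_R t s)) (nhdsWithin 0 (Ioi 0)) (nhds 0) :=
    tendsto_Phi_atBot.comp hz1
  have hP2 : Tendsto (fun s => Phi (zeta2 σ K r_R t s)) (nhdsWithin 0 (Ioi 0)) (nhds 0) :=
    tendsto_Phi_atBot.comp hz2
  have hid : Tendsto (fun s : ℝ => s) (nhdsWithin 0 (Ioi 0)) (nhds 0) :=
    tendsto_id.mono_left nhdsWithin_le_nhds
  have ht0 : Tendsto g (nhdsWithin 0 (Ioi 0)) (nhds 0) := by
    have hgeq : g = fun s => s * Real.exp (-(0 - r_R) * t) * Phi (zeta1 σ K r_R t s)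
        - K * Real.exp (-(0:ℝ) * t) * Phi (zeta2 σ K r_R t s) := by
      funext s; simp only [hg]; rw [BS]; simp only [one_mul]
    rw [hgeq]
    have := ((hid.mul_const (Real.exp (-(0 - r_R) * t))).mul hP1).sub
      ((hP2.const_mul (K * Real.exp (-(0:ℝ) * t))))
    simpa [mul_comm, mul_assoc, mul_left_comm] using this
  have hev : ∀ᶠ s in nhdsWithin 0 (Ioi 0), g s ≤ g S := by
    filter_upwards [Ioo_mem_nhdsGT_of_mem (left_mem_Ico.2 hS)] with s hs
    exact hmono hs.1 hS (le_of_lt hs.2)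
  exact le_of_tendsto ht0 hev

lemma zeta_sym1 (hσ : 0 < σ) (hK : 0 < K) (ht : 0 < t) (hS : 0 < S) :
    zeta1 σ S (-r_R) t K = -(zeta2 σ K r_R t S) := by
  have hu : Real.sqrt t ^ 2 = t := Real.sq_sqrt ht.le
  have hst : σ * Real.sqrt t ≠ 0 := (st_pos hσ ht).ne'
  unfold zeta2 zeta1
  rw [Real.log_div hK.ne' hS.ne', Real.log_div hS.ne' hK.ne']
  field_simp
  nlinarith [hu]

lemma zeta_sym2 (hσ : 0 < σ) (hK : 0 < K) (ht : 0 < t) (hS : 0 < S) :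
    zeta2 σ S (-r_R) t K = -(zeta1 σ K r_R t S) := by
  have h := zeta_sym1 (r_R := r_R) hσ hK ht hS
  unfold zeta2 at h ⊢
  linarith [h]

/-- Nonnegativity of the Black–Scholes price. -/

lemma BS_nonneg (hσ : 0 < σ) (hK : 0 < K) (hα : α = 1 ∨ α = -1)
    (ht : 0 < t) (hS : 0 < S) :
    0 ≤ BS σ K r r_R α t S := by
  rcases hα with rfl | rfl
  · have hcall : BS σ K r r_R 1 t S = Real.exp (-r * t) * BS σ K 0 r_R 1 t S := by
      rw [BS, BS]
      have e1 : Real.exp (-(r - r_R) * t) = Real.exp (-r * t) * Real.exp (-(0 - r_R) * t) := by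
        rw [← Real.exp_add]; ring_nf
      have e2 : Real.exp (-(0:ℝ) * t) = 1 := by norm_num
      rw [e1, e2]; ring
    rw [hcall]
    exact mul_nonneg (Real.exp_pos _).le (call0_nonneg hσ hK ht hS)
  · have hput : BS σ K r r_R (-1) t S
        = Real.exp ((r_R - r) * t) * BS σ S 0 (-r_R) 1 t K := by
      rw [BS, BS, zeta_sym1 hσ hK ht hS, zeta_sym2 hσ hK ht hS]
      have e1 : Real.exp ((r_R - r) * t) * Real.exp (-(0 - -r_R) * t) = Real.exp (-r * t) := by
        rw [← Real.exp_add]; ring_nf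
      have e2 : Real.exp (-(0:ℝ) * t) = 1 := by norm_num
      have e3 : Real.exp (-(r - r_R) * t) = Real.exp ((r_R - r) * t) := by ring_nf
      rw [e2, e3]
      simp only [one_mul, neg_one_mul]
      linear_combination (-(K * Phi (-zeta2 σ K r_R t S))) * e1
    rw [hput]
    exact mul_nonneg (Real.exp_pos _).le (call0_nonneg hσ hS ht hK)

end BSproofAux

/-- The risky Black–Scholes formula
`𝓑𝓢̂(t,S) = 𝓑𝓢(t,S) e^{−(λ_B(1−R_B)+λ_C(1−R_C))t}` satisfies the risky
(nonlinear) Black–Scholes equation on `(0,T)×(0,∞)`. -/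
theorem riskyBS_solves_risky_pde
    (σ K r r_R T α lB lC RB RC : ℝ)
    (hσ : 0 < σ) (hK : 0 < K) (hT : 0 < T) (hα : α = 1 ∨ α = -1)
    (hlB : 0 ≤ lB) (hlC : 0 ≤ lC)
    (hRB : RB ∈ Set.Icc (0 : ℝ) 1) (hRC : RC ∈ Set.Icc (0 : ℝ) 1)
    (BShat : ℝ → ℝ → ℝ)
    (hBShat : ∀ t S, BShat t S =
      BS σ K r r_R α t S * Real.exp (-(lB * (1 - RB) + lC * (1 - RC)) * t)) :
    ∀ t ∈ Set.Ioo 0 T, ∀ S ∈ Set.Ioi (0 : ℝ),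
      deriv (fun τ => BShat τ S) t
        - σ ^ 2 * S ^ 2 / 2 * deriv (deriv (fun s => BShat t s)) S
        - r_R * S * deriv (fun s => BShat t s) S
        + r * BShat t S + fXVA lB lC RB RC (BShat t S) = 0 := by
  intro t ht S hS
  have ht0 : 0 < t := ht.1
  have hS0 : 0 < S := hS
  set c : ℝ := lB * (1 - RB) + lC * (1 - RC) with hcdef
  set E : ℝ := Real.exp (-c * t) with hEdef
  set c0 : ℝ := (Real.sqrt (2 * Real.pi))⁻¹ with hc0
  set E1 : ℝ := Real.exp (-(r - r_R) * t) with hE1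
  set B : ℝ := BS σ K r r_R α t S with hB
  -- time derivative
  have hexpc : HasDerivAt (fun τ : ℝ => Real.exp (-c * τ)) (Real.exp (-c * t) * -c) t := by
    have h0 := (Real.hasDerivAt_exp (-c * t)).comp t ((hasDerivAt_id t).const_mul (-c))
    simpa [Function.comp_def, mul_comm, mul_assoc, mul_left_comm] using h0
  have hθ := hasDerivAt_BS_t (r := r) (r_R := r_R) hσ hK hα ht0 hS0
  have hBt : HasDerivAt (fun τ => BShat τ S)
      ((-(r - r_R) * (α * S * E1 * Phi (α * zeta1 σ K r_R t S))
        + r * (α * K * Real.exp (-r * t) * Phi (α * zeta2 σ K r_R t S))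
        + S * E1 * (c0 * gauss (zeta1 σ K r_R t S)) * (σ / (2 * Real.sqrt t))) * E
        + B * (Real.exp (-c * t) * -c)) t := by
    refine (hθ.mul hexpc).congr_of_eventuallyEq ?_
    filter_upwards with τ
    rw [hBShat τ S, hcdef]
    rfl
  have hDt := hBt.deriv
  -- first spatial derivative
  have hBs : ∀ s, 0 < s → HasDerivAt (fun s' => BShat t s')
      (α * E1 * Phi (α * zeta1 σ K r_R t s) * E) s := by
    intro s hs
    refine ((hasDerivAt_BS_S (r:=r) (r_R:=r_R) hσ hK hα ht0 hs).mul_const E).congr_of_eventuallyEq ?_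
    filter_upwards with s'
    rw [hBShat t s', hcdef]
  have hD1 : deriv (fun s => BShat t s) S = α * E1 * Phi (α * zeta1 σ K r_R t S) * E :=
    (hBs S hS0).deriv
  -- second spatial derivative
  have hev : deriv (fun s => BShat t s)
      =ᶠ[nhds S] fun s => α * E1 * Phi (α * zeta1 σ K r_R t s) * E := by
    filter_upwards [isOpen_Ioi.mem_nhds hS0] with s hs
    exact (hBs s hs).deriv
  have hD2 : deriv (deriv (fun s => BShat t s)) S
      = E1 * (c0 * gauss (zeta1 σ K r_R t S)) * (S * (σ * Real.sqrt t))⁻¹ * E := by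
    rw [hev.deriv_eq]
    exact (hasDerivAt_Delta (r:=r) (r_R:=r_R) hσ hK hα ht0 hS0 E).deriv
  -- source term
  have hBpos : 0 ≤ B := BS_nonneg hσ hK hα ht0 hS0
  have hvpos : 0 ≤ BShat t S := by
    rw [hBShat t S]; exact mul_nonneg hBpos (Real.exp_pos _).le
  have hf : fXVA lB lC RB RC (BShat t S) = c * BShat t S := by
    rw [fXVA, min_eq_right hvpos, max_eq_left hvpos, hcdef]; ring
  have hBhat : BShat t S = B * E := by rw [hBShat t S, hB, hEdef, hcdef]
  -- the PDE for BS itself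
  have hst : Real.sqrt t ≠ 0 := (Real.sqrt_pos.2 ht0).ne'
  have hmain : (-(r - r_R) * (α * S * E1 * Phi (α * zeta1 σ K r_R t S))
        + r * (α * K * Real.exp (-r * t) * Phi (α * zeta2 σ K r_R t S))
        + S * E1 * (c0 * gauss (zeta1 σ K r_R t S)) * (σ / (2 * Real.sqrt t)))
      - σ ^ 2 * S ^ 2 / 2 * (E1 * (c0 * gauss (zeta1 σ K r_R t S)) * (S * (σ * Real.sqrt t))⁻¹)
      - r_R * S * (α * E1 * Phi (α * zeta1 σ K r_R t S))
      + r * B = 0 := by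
    rw [hB, BS, hE1]
    field_simp
    ring
  rw [hDt, hD1, hD2, hf, hBhat]
  have hE : E = Real.exp (-c * t) := hEdef
  linear_combination E * hmain
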